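/- The Jupp transformation J is injective: if two strictly increasing knot vectors τ, τ' ∈ (a,b)^p (with endpoints a, b appended) have J(τ) = J(τ'), then τ = τ'. -/
import Mathlib

lemma tele_sum (n : ℕ) (σ : Fin (n + 2) → ℝ) :
    ∑ i : Fin (n + 1), (σ i.succ - σ i.castSucc) = σ (Fin.last (n + 1)) - σ 0 := by
  set F : ℕ → ℝ := fun k => σ ⟨min k (n + 1), by omega⟩ with hF
  have key : ∀ i : Fin (n + 1), σ i.succ - σ i.castSucc = F (i + 1) - F i := by
    intro i
    have hi : (i : ℕ) ≤ n := Nat.lt_succ_iff.mp i.isLt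
    have h1 : F (i + 1) = σ i.succ := by
      simp only [hF]; congr 1; ext; simp [Nat.min_eq_left (by omega : (i:ℕ)+1 ≤ n+1)]
    have h2 : F i = σ i.castSucc := by
      simp only [hF]; congr 1; ext; simp [Nat.min_eq_left (by omega : (i:ℕ) ≤ n+1)]
    rw [h1, h2]
  rw [Finset.sum_congr rfl (fun i _ => key i)]
  rw [Fin.sum_univ_eq_sum_range (fun k => F (k + 1) - F k) (n + 1),
    Finset.sum_range_sub F (n + 1)]
  have hlastF : F (n + 1) = σ (Fin.last (n + 1)) := by
    simp only [hF]; congr 1; ext; simp [Fin.last]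
  have h0F : F 0 = σ 0 := by
    simp only [hF]; congr 1
  rw [hlastF, h0F]

/-- The Jupp transformation is injective: if two strictly increasing knot vectors with the
same endpoints `a`, `b` have the same image under `J`, they coincide. -/
theorem stmt_10 (a b : ℝ) (hab : a < b) (p : ℕ) (τ τ' : Fin (p + 2) → ℝ)
    (hmono : StrictMono τ) (h0 : τ 0 = a) (hlast : τ (Fin.last (p + 1)) = b)
    (hmono' : StrictMono τ') (h0' : τ' 0 = a) (hlast' : τ' (Fin.last (p + 1)) = b)
    (hJ : ∀ i : Fin p,
      Real.log ((τ i.succ.succ - τ i.succ.castSucc) /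
          (τ i.succ.castSucc - τ i.castSucc.castSucc)) =
        Real.log ((τ' i.succ.succ - τ' i.succ.castSucc) /
          (τ' i.succ.castSucc - τ' i.castSucc.castSucc))) :
    τ = τ' := by
  set d : Fin (p + 1) → ℝ := fun i => τ i.succ - τ i.castSucc with hd
  set d' : Fin (p + 1) → ℝ := fun i => τ' i.succ - τ' i.castSucc with hd'
  have hdpos : ∀ i, 0 < d i := fun i => sub_pos.mpr (hmono i.castSucc_lt_succ)
  have hd'pos : ∀ i, 0 < d' i := fun i => sub_pos.mpr (hmono' i.castSucc_lt_succ)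
  -- ratios equal
  have hratio : ∀ i : Fin p, d i.succ * d' i.castSucc = d' i.succ * d i.castSucc := by
    intro i
    have h1 : d i.succ = τ i.succ.succ - τ i.succ.castSucc := rfl
    have h2 : d i.castSucc = τ i.succ.castSucc - τ i.castSucc.castSucc := by
      simp only [hd, Fin.succ_castSucc]
    have h1' : d' i.succ = τ' i.succ.succ - τ' i.succ.castSucc := rfl
    have h2' : d' i.castSucc = τ' i.succ.castSucc - τ' i.castSucc.castSucc := by
      simp only [hd', Fin.succ_castSucc]
    have hpos1 : 0 < d i.succ / d i.castSucc := div_pos (hdpos _) (hdpos _)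
    have hpos2 : 0 < d' i.succ / d' i.castSucc := div_pos (hd'pos _) (hd'pos _)
    have := hJ i
    rw [← h1, ← h2, ← h1', ← h2'] at this
    have heq : d i.succ / d i.castSucc = d' i.succ / d' i.castSucc :=
      Real.log_injOn_pos (Set.mem_Ioi.mpr hpos1) (Set.mem_Ioi.mpr hpos2) this
    exact (div_eq_div_iff (ne_of_gt (hdpos _)) (ne_of_gt (hd'pos _))).mp heq
  -- proportionality
  have hprop : ∀ i : Fin (p + 1), d' i * d 0 = d i * d' 0 := by
    intro i
    induction i using Fin.induction with
    | zero => ring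
    | succ i ih =>
      have hne : d i.castSucc ≠ 0 := ne_of_gt (hdpos _)
      have : d' i.succ * d 0 * d i.castSucc = d i.succ * d' 0 * d i.castSucc := by
        have h := hratio i
        calc d' i.succ * d 0 * d i.castSucc = d' i.succ * d i.castSucc * d 0 := by ring
          _ = d i.succ * d' i.castSucc * d 0 := by rw [← h]
          _ = d i.succ * (d' i.castSucc * d 0) := by ring
          _ = d i.succ * (d i.castSucc * d' 0) := by rw [ih]
          _ = d i.succ * d' 0 * d i.castSucc := by ring
      exact mul_right_cancel₀ hne this
  -- sums
  have hsum : ∑ i, d i = b - a := by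
    rw [hd, tele_sum p τ, hlast, h0]
  have hsum' : ∑ i, d' i = b - a := by
    rw [hd', tele_sum p τ', hlast', h0']
  have hba : b - a ≠ 0 := sub_ne_zero.mpr (ne_of_gt hab)
  have h00 : d 0 = d' 0 := by
    have : (∑ i, d' i) * d 0 = (∑ i, d i) * d' 0 := by
      rw [Finset.sum_mul, Finset.sum_mul]
      exact Finset.sum_congr rfl fun i _ => hprop i
    rw [hsum, hsum'] at this
    exact mul_left_cancel₀ hba this
  have hdd : ∀ i, d i = d' i := by
    intro i
    have h := hprop i
    rw [← h00] at h
    exact (mul_right_cancel₀ (ne_of_gt (hdpos 0)) h).symm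
  -- conclude
  funext i
  induction i using Fin.induction with
  | zero => rw [h0, h0']
  | succ i ih =>
    have := hdd i
    simp only [hd, hd'] at this
    linarith [this, ih]
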